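/- Let T be a Tambara functor on a finite group G such that T(X) is a Noetherian ring for every transitive finite G-set X. Then every ascending chain of ideals 𝔦_1 ⊆ 𝔦_2 ⊆ 𝔦_3 ⊆ ⋯ of T stabilizes. -/

import Mathlib

set_option autoImplicit false

/-! Finite G-sets -/

structure GSet (G : Type) [Group G] : Type 1 where
  carrier : Type
  [mulAction : MulAction G carrier]
  [finite : Finite carrier]

attribute [instance] GSet.mulAction GSet.finite

/-- Equivariant maps of finite `G`-sets. -/
structure GSetHom {G : Type} [Group G] (X Y : GSet G) : Type where
  toFun : X.carrier → Y.carrier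
  map_smul : ∀ (g : G) (x : X.carrier), toFun (g • x) = g • toFun x

namespace GSetHom

variable {G : Type} [Group G]

def id (X : GSet G) : GSetHom X X := ⟨fun x => x, fun _ _ => rfl⟩

def comp {X Y Z : GSet G} (g : GSetHom Y Z) (f : GSetHom X Y) : GSetHom X Z :=
  ⟨fun x => g.toFun (f.toFun x), fun a x => by
    show g.toFun (f.toFun (a • x)) = a • g.toFun (f.toFun x)
    rw [f.map_smul, g.map_smul]⟩

end GSetHom

namespace GSet

variable {G : Type} [Group G]

/-- Binary disjoint union of `G`-sets. -/
def sum (X Y : GSet G) : GSet G where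
  carrier := X.carrier ⊕ Y.carrier

def inl (X Y : GSet G) : GSetHom X (X.sum Y) := ⟨Sum.inl, fun _ _ => rfl⟩

def inr (X Y : GSet G) : GSetHom Y (X.sum Y) := ⟨Sum.inr, fun _ _ => rfl⟩

instance : MulAction G Empty where
  smul _ x := x.elim
  one_smul x := x.elim
  mul_smul _ _ x := x.elim

/-- The empty `G`-set. -/
def empty (G : Type) [Group G] : GSet G where
  carrier := Empty

/-- Finite disjoint unions of `G`-sets. -/
def sigma {n : ℕ} (Xs : Fin n → GSet G) : GSet G where
  carrier := Σ i, (Xs i).carrier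

def sigmaIncl {n : ℕ} (Xs : Fin n → GSet G) (i : Fin n) : GSetHom (Xs i) (sigma Xs) :=
  ⟨fun x => ⟨i, x⟩, fun _ _ => rfl⟩

/-- The canonical pullback of two `G`-maps. -/
def pullback {X Y Z : GSet G} (f : GSetHom X Z) (g : GSetHom Y Z) : GSet G where
  carrier := { q : X.carrier × Y.carrier // f.toFun q.1 = g.toFun q.2 }
  mulAction :=
  { smul := fun a q => ⟨a • q.val, by
      show f.toFun (a • q.val.1) = g.toFun (a • q.val.2)
      rw [f.map_smul, g.map_smul, q.property]⟩
    one_smul := fun q => Subtype.ext (one_smul G q.val)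
    mul_smul := fun a b q => Subtype.ext (mul_smul a b q.val) }

def pbFst {X Y Z : GSet G} (f : GSetHom X Z) (g : GSetHom Y Z) :
    GSetHom (pullback f g) X := ⟨fun q => q.val.1, fun _ _ => rfl⟩

def pbSnd {X Y Z : GSet G} (f : GSetHom X Z) (g : GSetHom Y Z) :
    GSetHom (pullback f g) Y := ⟨fun q => q.val.2, fun _ _ => rfl⟩

/-- The complement of the image of a `G`-map, as a `G`-set. -/
def compl {X Y : GSet G} (f : GSetHom X Y) : GSet G where
  carrier := { y : Y.carrier // ∀ x, f.toFun x ≠ y }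
  mulAction :=
  { smul := fun g y => ⟨g • y.val, fun x h => y.property (g⁻¹ • x) (by
      rw [f.map_smul, h, inv_smul_smul])⟩
    one_smul := fun y => Subtype.ext (one_smul G y.val)
    mul_smul := fun a b y => Subtype.ext (mul_smul a b y.val) }

def complIncl {X Y : GSet G} (f : GSetHom X Y) : GSetHom (compl f) Y :=
  ⟨fun y => y.val, fun _ _ => rfl⟩

/-- Points of Tambara's dependent product `Π_f(A)`: pairs `(y, σ)` of a point `y : Y`
and a section `σ` of `p` on the fiber `f⁻¹(y)` (encoded as an `Option`-valued function
supported exactly on the fiber). -/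
def PiProp {X Y A : GSet G} (f : GSetHom X Y) (p : GSetHom A X)
    (s : Y.carrier × (X.carrier → Option A.carrier)) : Prop :=
  (∀ x, (s.2 x).isSome = true ↔ f.toFun x = s.1) ∧
  (∀ x a, s.2 x = some a → p.toFun a = x)

def PiCar {X Y A : GSet G} (f : GSetHom X Y) (p : GSetHom A X) : Type :=
  { s : Y.carrier × (X.carrier → Option A.carrier) // PiProp f p s }

instance optionFinite {α : Type} [Finite α] : Finite (Option α) :=
  Finite.of_equiv _ (Equiv.optionEquivSumPUnit.{0,0} α).symm

instance piFinite {X Y A : GSet G} (f : GSetHom X Y) (p : GSetHom A X) :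
    Finite (PiCar f p) := by
  unfold PiCar; infer_instance

def piSmul {X Y A : GSet G} (f : GSetHom X Y) (p : GSetHom A X) (g : G)
    (s : PiCar f p) : PiCar f p :=
  ⟨(g • s.val.1, fun x => (s.val.2 (g⁻¹ • x)).map (g • ·)), by
    constructor
    · intro x
      rw [Option.isSome_map, s.property.1 (g⁻¹ • x), f.map_smul]
      constructor
      · intro h; rw [← h, smul_inv_smul]
      · intro h; rw [h, inv_smul_smul]
    · intro x a ha
      rcases Option.map_eq_some_iff.mp ha with ⟨b, hb, rfl⟩
      rw [p.map_smul, s.property.2 _ _ hb, smul_inv_smul]⟩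

instance piAction {X Y A : GSet G} (f : GSetHom X Y) (p : GSetHom A X) :
    MulAction G (PiCar f p) where
  smul := piSmul f p
  one_smul s := by
    apply Subtype.ext
    refine Prod.ext (one_smul G s.val.1) ?_
    funext x
    show (s.val.2 ((1:G)⁻¹ • x)).map ((1:G) • ·) = s.val.2 x
    rw [inv_one, one_smul]
    cases h : s.val.2 x <;> simp [one_smul]
  mul_smul a b s := by
    apply Subtype.ext
    refine Prod.ext (mul_smul a b s.val.1) ?_
    funext x
    show (s.val.2 ((a * b)⁻¹ • x)).map ((a * b) • ·)
        = ((s.val.2 (b⁻¹ • (a⁻¹ • x))).map (b • ·)).map (a • ·)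
    rw [Option.map_map, mul_inv_rev, mul_smul]
    cases h : s.val.2 (b⁻¹ • a⁻¹ • x) <;> simp [mul_smul, Function.comp]

/-- Tambara's dependent product `Π_f(A)` as a `G`-set. -/
def piObj {X Y A : GSet G} (f : GSetHom X Y) (p : GSetHom A X) : GSet G where
  carrier := PiCar f p

/-- The projection `π : Π_f(A) → Y`. -/
def piPr {X Y A : GSet G} (f : GSetHom X Y) (p : GSetHom A X) :
    GSetHom (piObj f p) Y := ⟨fun s => s.val.1, fun _ _ => rfl⟩

theorem optGet {α : Type} {o : Option α} {a : α} (h : o = some a) :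
    ∀ hs : o.isSome = true, o.get hs = a := by subst h; intro _; rfl

/-- The evaluation map `λ : X ×_Y Π_f(A) → A`, `(x, (y, σ)) ↦ σ(x)`. -/
def piEval {X Y A : GSet G} (f : GSetHom X Y) (p : GSetHom A X) :
    GSetHom (pullback f (piPr f p)) A where
  toFun z := (z.val.2.val.2 z.val.1).get (by
    rw [z.val.2.property.1 z.val.1]; exact z.property)
  map_smul g z := by
    have hs : (z.val.2.val.2 z.val.1).isSome = true := by
      rw [z.val.2.property.1 z.val.1]; exact z.property
    obtain ⟨a, ha⟩ := Option.isSome_iff_exists.mp hs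
    have h1 : z.val.2.val.2 z.val.1 = some a := ha
    have h2 : (g • z).val.2.val.2 (g • z).val.1 = some (g • a) := by
      show (z.val.2.val.2 (g⁻¹ • (g • z.val.1))).map (g • ·) = some (g • a)
      rw [inv_smul_smul, h1]; rfl
    simp only [optGet h2, optGet h1]

end GSet

namespace GSet

/-- A transitive (nonempty) finite `G`-set. -/
def IsTransitive {G : Type} [Group G] (X : GSet G) : Prop :=
  Nonempty X.carrier ∧ MulAction.IsPretransitive G X.carrier

end GSet

/-! Tambara functors -/

/-- The underlying system of commutative rings of a Tambara functor. -/
structure TamData (G : Type) [Group G] : Type 1 where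
  obj : GSet G → Type
  ring : ∀ X, CommRing (obj X)

attribute [instance] TamData.ring

/-- A Tambara functor on the finite group `G`: a system of commutative rings `obj X`
indexed by finite `G`-sets, together with restrictions `res`, additive transfers `tr`
and multiplicative transfers `nm`, functorial, additive, satisfying the Mackey
base-change conditions, the projection formula, and Tambara's distributive law. -/
structure TambaraFunctor (G : Type) [Group G] extends TamData G where
  res : ∀ {X Y : GSet G}, GSetHom X Y → (obj Y →+* obj X)
  tr : ∀ {X Y : GSet G}, GSetHom X Y → (obj X →+ obj Y)
  nm : ∀ {X Y : GSet G}, GSetHom X Y → (obj X →* obj Y)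
  res_id : ∀ {X : GSet G} (x : obj X), res (GSetHom.id X) x = x
  res_comp : ∀ {X Y Z : GSet G} (f : GSetHom X Y) (g : GSetHom Y Z) (z : obj Z),
    res f (res g z) = res (g.comp f) z
  tr_id : ∀ {X : GSet G} (x : obj X), tr (GSetHom.id X) x = x
  tr_comp : ∀ {X Y Z : GSet G} (f : GSetHom X Y) (g : GSetHom Y Z) (x : obj X),
    tr g (tr f x) = tr (g.comp f) x
  nm_id : ∀ {X : GSet G} (x : obj X), nm (GSetHom.id X) x = x
  nm_comp : ∀ {X Y Z : GSet G} (f : GSetHom X Y) (g : GSetHom Y Z) (x : obj X),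
    nm g (nm f x) = nm (g.comp f) x
  /-- additivity on binary disjoint unions -/
  add_bij : ∀ X Y : GSet G, Function.Bijective
    (fun t : obj (X.sum Y) => (res (GSet.inl X Y) t, res (GSet.inr X Y) t))
  /-- `T(∅)` is the zero ring -/
  empty_subsingleton : ∀ x y : obj (GSet.empty G), x = y
  /-- Mackey base change for the additive transfer -/
  tr_bc : ∀ {X Y Z : GSet G} (f : GSetHom X Z) (g : GSetHom Y Z) (x : obj X),
    res g (tr f x) = tr (GSet.pbSnd f g) (res (GSet.pbFst f g) x)
  /-- Mackey base change for the multiplicative transfer -/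
  nm_bc : ∀ {X Y Z : GSet G} (f : GSetHom X Z) (g : GSetHom Y Z) (x : obj X),
    res g (nm f x) = nm (GSet.pbSnd f g) (res (GSet.pbFst f g) x)
  /-- the projection formula -/
  proj_formula : ∀ {X Y : GSet G} (f : GSetHom X Y) (a : obj X) (b : obj Y),
    tr f (a * res f b) = tr f a * b
  /-- the norm of zero is the additive transfer of `1` from the complement of the image -/
  nm_zero : ∀ {X Y : GSet G} (f : GSetHom X Y), nm f (0 : obj X) = tr (GSet.complIncl f) 1
  /-- Tambara's distributive law, via the canonical exponential diagram on `Π_f(A)` -/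
  distrib : ∀ {X Y A : GSet G} (f : GSetHom X Y) (p : GSetHom A X) (a : obj A),
    nm f (tr p a) = tr (GSet.piPr f p)
      (nm (GSet.pbSnd f (GSet.piPr f p)) (res (GSet.piEval f p) a))

namespace TambaraFunctor

variable {G : Type} [Group G]

/-- `f_!(x) = f_•(x) - f_•(0)`. -/
def shriek (T : TambaraFunctor G) {X Y : GSet G} (f : GSetHom X Y) (x : T.obj X) :
    T.obj Y := T.nm f x - T.nm f 0

end TambaraFunctor

/-- A morphism of Tambara functors: a family of ring homomorphisms natural with respect
to restrictions, additive transfers and multiplicative transfers. -/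
structure TamHom {G : Type} [Group G] (T S : TambaraFunctor G) where
  app : ∀ X : GSet G, T.obj X →+* S.obj X
  app_res : ∀ {X Y : GSet G} (f : GSetHom X Y) (y : T.obj Y),
    app X (T.res f y) = S.res f (app Y y)
  app_tr : ∀ {X Y : GSet G} (f : GSetHom X Y) (x : T.obj X),
    app Y (T.tr f x) = S.tr f (app X x)
  app_nm : ∀ {X Y : GSet G} (f : GSetHom X Y) (x : T.obj X),
    app Y (T.nm f x) = S.nm f (app X x)

namespace TambaraFunctor

variable {G : Type} [Group G]

/-- An ideal of a Tambara functor: a family of ideals closed under restrictions,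
additive transfers, and satisfying `f_•(𝔦(X)) ⊆ f_•(0) + 𝔦(Y)`
(equivalently, closed under `f_!`). -/
structure IsIdeal (T : TambaraFunctor G) (I : ∀ X : GSet G, Ideal (T.obj X)) : Prop where
  res_mem : ∀ {X Y : GSet G} (f : GSetHom X Y) {y : T.obj Y}, y ∈ I Y → T.res f y ∈ I X
  tr_mem : ∀ {X Y : GSet G} (f : GSetHom X Y) {x : T.obj X}, x ∈ I X → T.tr f x ∈ I Y
  shriek_mem : ∀ {X Y : GSet G} (f : GSetHom X Y) {x : T.obj X},
    x ∈ I X → T.shriek f x ∈ I Y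

/-- The ideal generated by a family of subsets: the intersection of all ideals
containing it. -/
def gen (T : TambaraFunctor G) (S : ∀ X : GSet G, Set (T.obj X)) (X : GSet G) :
    Ideal (T.obj X) :=
  ⨅ (I : ∀ Y : GSet G, Ideal (T.obj Y)) (_ : T.IsIdeal I) (_ : ∀ Y, S Y ⊆ ↑(I Y)), I X

/-- The family of subsets consisting of the single element `a ∈ T(A)`. -/
def single (T : TambaraFunctor G) (A : GSet G) (a : T.obj A) (X : GSet G) :
    Set (T.obj X) := { x | ∃ h : A = X, h ▸ a = x }

/-- The principal ideal `⟨a⟩` generated by `a ∈ T(A)`. -/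
def principal (T : TambaraFunctor G) (A : GSet G) (a : T.obj A) :
    ∀ X : GSet G, Ideal (T.obj X) := T.gen (T.single A a)

/-- The defining set of the product of two ideals. -/
def mulSet (T : TambaraFunctor G) (I J : ∀ X : GSet G, Ideal (T.obj X)) (X : GSet G) :
    Set (T.obj X) :=
  { x | ∃ (A : GSet G) (p : GSetHom A X) (a b : T.obj A),
      a ∈ I A ∧ b ∈ J A ∧ x = T.tr p (a * b) }

/-- The product of two ideals of a Tambara functor. -/
def mulIdl (T : TambaraFunctor G) (I J : ∀ X : GSet G, Ideal (T.obj X)) (X : GSet G) :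
    Ideal (T.obj X) := Ideal.span (T.mulSet I J X)

/-- Iterated products of ideals. -/
def mulMulti (T : TambaraFunctor G) :
    List (∀ X : GSet G, Ideal (T.obj X)) → ∀ X : GSet G, Ideal (T.obj X)
  | [] => fun _ => ⊤
  | I :: ls => T.mulIdl I (T.mulMulti ls)

/-- A prime ideal of a Tambara functor. -/
structure IsPrime (T : TambaraFunctor G) (P : ∀ X : GSet G, Ideal (T.obj X)) : Prop where
  isIdeal : T.IsIdeal P
  ne_top : ∃ X : GSet G, P X ≠ ⊤
  mem_or_mem : ∀ {X Y : GSet G}, X.IsTransitive → Y.IsTransitive →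
    ∀ {a : T.obj X} {b : T.obj Y},
      (∀ Z : GSet G, T.mulIdl (T.principal X a) (T.principal Y b) Z ≤ P Z) →
      a ∈ P X ∨ b ∈ P Y

/-- A maximal ideal of a Tambara functor. -/
structure IsMaximal (T : TambaraFunctor G) (M : ∀ X : GSet G, Ideal (T.obj X)) : Prop where
  isIdeal : T.IsIdeal M
  ne_top : ∃ X : GSet G, M X ≠ ⊤
  eq_of_le : ∀ K : ∀ X : GSet G, Ideal (T.obj X), T.IsIdeal K →
    (∀ X, M X ≤ K X) → (K = M ∨ ∀ X, K X = ⊤)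

end TambaraFunctor

namespace GSet

/-- The `G`-set `G/e`, i.e. `G` with the left regular action. -/
def regular (G : Type) [Group G] [Finite G] : GSet G where
  carrier := G

/-- Right multiplication `G/e → G/e`, an equivariant map. -/
def rightMul {G : Type} [Group G] [Finite G] (g : G) :
    GSetHom (regular G) (regular G) :=
  ⟨fun x => (id x : G) * g, fun a x => mul_assoc a x g⟩

end GSet


/-! Auxiliary machinery -/

section Aux

variable {G : Type} [Group G]

theorem GSetHom.ext' {X Y : GSet G} {f g : GSetHom X Y} (h : f.toFun = g.toFun) : f = g := by
  cases f; cases g; cases h; rfl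

/-- A bijective equivariant map has an equivariant two-sided inverse. -/
theorem GSetHom.exists_inv {X Y : GSet G} (f : GSetHom X Y) (hf : Function.Bijective f.toFun) :
    ∃ g : GSetHom Y X, g.comp f = GSetHom.id X ∧ f.comp g = GSetHom.id Y := by
  classical
  let E := Equiv.ofBijective f.toFun hf
  refine ⟨⟨fun y => E.symm y, ?_⟩, ?_, ?_⟩
  · intro g y
    apply hf.injective
    have h1 : f.toFun (E.symm (g • y)) = g • y := E.apply_symm_apply (g • y)
    have h2 : f.toFun (g • E.symm y) = g • f.toFun (E.symm y) := f.map_smul _ _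
    rw [h1, h2]
    rw [show f.toFun (E.symm y) = y from E.apply_symm_apply y]
  · exact GSetHom.ext' (funext fun x => E.symm_apply_apply x)
  · exact GSetHom.ext' (funext fun y => E.apply_symm_apply y)

/-- A sub-`G`-set cut out by an invariant predicate. -/
def GSet.subGSet (X : GSet G) (p : X.carrier → Prop)
    (hp : ∀ (g : G) (y : X.carrier), p y → p (g • y)) : GSet G where
  carrier := {y : X.carrier // p y}
  mulAction :=
  { smul := fun g y => ⟨g • y.1, hp g y.1 y.2⟩
    one_smul := fun y => Subtype.ext (one_smul G y.1)
    mul_smul := fun a b y => Subtype.ext (mul_smul a b y.1) }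

namespace TambaraFunctor

variable (T : TambaraFunctor G)

theorem obj_subsing {X : GSet G} (hX : IsEmpty X.carrier) (a b : T.obj X) : a = b := by
  let h : GSetHom X (GSet.empty G) := ⟨fun x => hX.elim x, fun g x => hX.elim x⟩
  let k : GSetHom (GSet.empty G) X := ⟨fun x => x.elim, fun g x => x.elim⟩
  have hkh : k.comp h = GSetHom.id X := GSetHom.ext' (funext fun x => hX.elim x)
  have ha : T.res h (T.res k a) = a := by rw [T.res_comp h k a, hkh, T.res_id]
  have hb : T.res h (T.res k b) = b := by rw [T.res_comp h k b, hkh, T.res_id]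
  rw [← ha, ← hb, T.empty_subsingleton (T.res k a) (T.res k b)]

theorem tr_empty {X Y : GSet G} (hX : IsEmpty X.carrier) (f : GSetHom X Y) (a : T.obj X) :
    T.tr f a = 0 := by
  rw [T.obj_subsing hX a 0, map_zero]

/-- `tr e 1` is a unit when `e` is an isomorphism. -/
theorem tr_one_mul {P X : GSet G} (e : GSetHom P X) (d : GSetHom X P)
    (hde : d.comp e = GSetHom.id P) (hed : e.comp d = GSetHom.id X) :
    T.tr e 1 * T.res d (T.tr d 1) = 1 := by
  have h2 : ∀ y : T.obj P, T.res e (T.res d y) = y := fun y => by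
    rw [T.res_comp e d y, hde, T.res_id]
  have h3 : T.tr e (T.tr d 1) = 1 := by rw [T.tr_comp d e 1, hed, T.tr_id]
  calc T.tr e 1 * T.res d (T.tr d 1)
      = T.tr e (1 * T.res e (T.res d (T.tr d 1))) := (T.proj_formula e 1 _).symm
    _ = T.tr e (T.tr d 1) := by rw [one_mul, h2]
    _ = 1 := h3

theorem mem_iff_res_mem {I : ∀ X : GSet G, Ideal (T.obj X)} (hI : T.IsIdeal I)
    {P X : GSet G} (e : GSetHom P X) (d : GSetHom X P)
    (hde : d.comp e = GSetHom.id P) (hed : e.comp d = GSetHom.id X) (t : T.obj X) :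
    t ∈ I X ↔ T.res e t ∈ I P := by
  constructor
  · exact fun h => hI.res_mem e h
  · intro h
    have hd : T.res d (T.res e t) = t := by rw [T.res_comp d e t, hed, T.res_id]
    exact hd ▸ hI.res_mem d h

theorem mem_sum_iff {I : ∀ X : GSet G, Ideal (T.obj X)} (hI : T.IsIdeal I)
    (X Y : GSet G) (t : T.obj (X.sum Y)) :
    t ∈ I (X.sum Y) ↔ T.res (GSet.inl X Y) t ∈ I X ∧ T.res (GSet.inr X Y) t ∈ I Y := by
  constructor
  · exact fun h => ⟨hI.res_mem _ h, hI.res_mem _ h⟩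
  rintro ⟨hx, hy⟩
  set j₁ := GSet.inl X Y
  set j₂ := GSet.inr X Y
  -- the diagonal isomorphisms for the self-pullbacks of j₁ and j₂
  let e₁ : GSetHom (GSet.pullback j₁ j₁) X := GSet.pbSnd j₁ j₁
  let d₁ : GSetHom X (GSet.pullback j₁ j₁) := ⟨fun a => ⟨(a, a), rfl⟩, fun g a => Subtype.ext rfl⟩
  have hpb₁ : GSet.pbFst j₁ j₁ = e₁ :=
    GSetHom.ext' (funext fun q => Sum.inl_injective q.property)
  have hde₁ : d₁.comp e₁ = GSetHom.id (GSet.pullback j₁ j₁) :=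
    GSetHom.ext' (funext fun q => Subtype.ext
      (Prod.ext_iff.mpr ⟨(Sum.inl_injective q.property).symm, rfl⟩))
  have hed₁ : e₁.comp d₁ = GSetHom.id X := GSetHom.ext' (funext fun a => rfl)
  let e₂ : GSetHom (GSet.pullback j₂ j₂) Y := GSet.pbSnd j₂ j₂
  let d₂ : GSetHom Y (GSet.pullback j₂ j₂) := ⟨fun a => ⟨(a, a), rfl⟩, fun g a => Subtype.ext rfl⟩
  have hpb₂ : GSet.pbFst j₂ j₂ = e₂ :=
    GSetHom.ext' (funext fun q => Sum.inr_injective q.property)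
  have hde₂ : d₂.comp e₂ = GSetHom.id (GSet.pullback j₂ j₂) :=
    GSetHom.ext' (funext fun q => Subtype.ext
      (Prod.ext_iff.mpr ⟨(Sum.inr_injective q.property).symm, rfl⟩))
  have hed₂ : e₂.comp d₂ = GSetHom.id Y := GSetHom.ext' (funext fun a => rfl)
  set κ₁ := T.res d₁ (T.tr d₁ 1) with hκ₁def
  set κ₂ := T.res d₂ (T.tr d₂ 1) with hκ₂def
  have hκ₁ : T.tr e₁ 1 * κ₁ = 1 := T.tr_one_mul e₁ d₁ hde₁ hed₁
  have hκ₂ : T.tr e₂ 1 * κ₂ = 1 := T.tr_one_mul e₂ d₂ hde₂ hed₂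
  -- restriction computations
  have hA₁ : ∀ a : T.obj X, T.res j₁ (T.tr j₁ a) = T.tr e₁ 1 * a := by
    intro a
    rw [T.tr_bc j₁ j₁ a, hpb₁]
    calc T.tr e₁ (T.res e₁ a) = T.tr e₁ (1 * T.res e₁ a) := by rw [one_mul]
      _ = T.tr e₁ 1 * a := T.proj_formula e₁ 1 a
  have hA₂ : ∀ a : T.obj Y, T.res j₂ (T.tr j₂ a) = T.tr e₂ 1 * a := by
    intro a
    rw [T.tr_bc j₂ j₂ a, hpb₂]
    calc T.tr e₂ (T.res e₂ a) = T.tr e₂ (1 * T.res e₂ a) := by rw [one_mul]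
      _ = T.tr e₂ 1 * a := T.proj_formula e₂ 1 a
  have hB₁ : ∀ a : T.obj X, T.res j₂ (T.tr j₁ a) = 0 := by
    intro a
    rw [T.tr_bc j₁ j₂ a]
    refine T.tr_empty ?_ _ _
    exact ⟨fun q => Sum.inl_ne_inr q.property⟩
  have hB₂ : ∀ a : T.obj Y, T.res j₁ (T.tr j₂ a) = 0 := by
    intro a
    rw [T.tr_bc j₂ j₁ a]
    refine T.tr_empty ?_ _ _
    exact ⟨fun q => Sum.inr_ne_inl q.property⟩
  set s := T.tr j₁ (κ₁ * T.res j₁ t) + T.tr j₂ (κ₂ * T.res j₂ t) with hsdef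
  have hs : s ∈ I (X.sum Y) := by
    exact add_mem (hI.tr_mem j₁ (Ideal.mul_mem_left _ κ₁ hx))
      (hI.tr_mem j₂ (Ideal.mul_mem_left _ κ₂ hy))
  have hts : t = s := by
    apply (T.add_bij X Y).injective
    show (T.res j₁ t, T.res j₂ t) = (T.res j₁ s, T.res j₂ s)
    rw [Prod.mk.injEq]
    constructor
    · rw [hsdef, map_add, hA₁, hB₂, add_zero, ← mul_assoc, hκ₁, one_mul]
    · rw [hsdef, map_add, hA₂, hB₁, zero_add, ← mul_assoc, hκ₂, one_mul]
  rw [hts]; exact hs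

/-- Determination of ideals by their values on transitive `G`-sets. -/
theorem ideal_det {I J : ∀ X : GSet G, Ideal (T.obj X)} (hI : T.IsIdeal I) (hJ : T.IsIdeal J)
    (htrans : ∀ Z : GSet G, Z.IsTransitive → I Z = J Z) : ∀ X, I X = J X := by
  suffices H : ∀ (n : ℕ) (X : GSet G), Nat.card X.carrier = n → I X = J X by
    exact fun X => H _ X rfl
  intro n
  induction n using Nat.strong_induction_on with
  | _ n IH =>
  intro X hcard
  classical
  by_cases hne : Nonempty X.carrier
  · obtain ⟨x₀⟩ := hne
    by_cases hall : ∀ y, ∃ g : G, g • x₀ = y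
    · -- X is transitive
      refine htrans X ⟨⟨x₀⟩, ⟨fun a b => ?_⟩⟩
      obtain ⟨g, hg⟩ := hall a
      obtain ⟨h, hh⟩ := hall b
      refine ⟨h * g⁻¹, ?_⟩
      rw [← hg, ← hh, ← mul_smul, mul_assoc, inv_mul_cancel, mul_one]
    · push_neg at hall
      obtain ⟨y₀, hy₀⟩ := hall
      set p : X.carrier → Prop := fun y => ∃ g : G, g • x₀ = y with hpdef
      have hpO : ∀ (g : G) (y : X.carrier), p y → p (g • y) := by
        rintro g y ⟨h, rfl⟩; exact ⟨g * h, mul_smul g h x₀⟩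
      have hpC : ∀ (g : G) (y : X.carrier), ¬ p y → ¬ p (g • y) := by
        intro g y hy hcon
        obtain ⟨h, hh⟩ := hcon
        exact hy ⟨g⁻¹ * h, by rw [mul_smul, hh, inv_smul_smul]⟩
      set O := X.subGSet p hpO with hOdef
      set C := X.subGSet (fun y => ¬ p y) hpC with hCdef
      let incl : GSetHom (O.sum C) X :=
        ⟨Sum.elim Subtype.val Subtype.val, by rintro g (o | o) <;> rfl⟩
      have hbij : Function.Bijective incl.toFun := by
        constructor
        · rintro (a | a) (b | b) hab
          · exact congrArg Sum.inl (Subtype.ext hab)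
          · have h' : a.1 = b.1 := hab
            exact absurd (h' ▸ a.2) b.2
          · have h' : a.1 = b.1 := hab
            exact absurd (h'.symm ▸ b.2) a.2
          · exact congrArg Sum.inr (Subtype.ext hab)
        · intro y
          by_cases hy : p y
          · exact ⟨Sum.inl ⟨y, hy⟩, rfl⟩
          · exact ⟨Sum.inr ⟨y, hy⟩, rfl⟩
      obtain ⟨ψ, hψ₁, hψ₂⟩ := incl.exists_inv hbij
      haveI : Nonempty O.carrier := ⟨⟨x₀, ⟨1, one_smul G x₀⟩⟩⟩
      haveI : Nonempty C.carrier :=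
        ⟨⟨y₀, fun hcon => by obtain ⟨g, hg⟩ := hcon; exact hy₀ g hg⟩⟩
      have hcards : Nat.card O.carrier + Nat.card C.carrier = n := by
        rw [← hcard, ← Nat.card_sum]
        exact Nat.card_eq_of_bijective incl.toFun hbij
      have hOpos : 0 < Nat.card O.carrier := Nat.card_pos
      have hCpos : 0 < Nat.card C.carrier := Nat.card_pos
      have hO : I O = J O := IH (Nat.card O.carrier) (by omega) O rfl
      have hC : I C = J C := IH (Nat.card C.carrier) (by omega) C rfl
      ext t
      rw [T.mem_iff_res_mem hI incl ψ hψ₁ hψ₂ t, T.mem_iff_res_mem hJ incl ψ hψ₁ hψ₂ t,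
        T.mem_sum_iff hI, T.mem_sum_iff hJ, hO, hC]
  · have hE : IsEmpty X.carrier := not_nonempty_iff.mp hne
    ext t
    rw [T.obj_subsing hE t 0]
    simp

end TambaraFunctor

end Aux

/-- if `T(X)` is Noetherian for every transitive `X`, then every ascending
chain of ideals of `T` stabilizes. -/
theorem ideal_chain_stabilizes (G : Type) [Group G] [Finite G] (T : TambaraFunctor G)
    (hNoeth : ∀ X : GSet G, X.IsTransitive → IsNoetherianRing (T.obj X))
    (c : ℕ → ∀ X : GSet G, Ideal (T.obj X)) (hc : ∀ n, T.IsIdeal (c n))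
    (hmono : ∀ (n : ℕ) (X : GSet G), c n X ≤ c (n + 1) X) :
    ∃ n₀ : ℕ, ∀ n : ℕ, n₀ ≤ n → c n = c n₀ := by
  classical
  -- standard transitive G-sets
  let XH : Subgroup G → GSet G := fun H => { carrier := G ⧸ H }
  have hXHtrans : ∀ H : Subgroup G, (XH H).IsTransitive := by
    intro H
    refine ⟨⟨QuotientGroup.mk 1⟩, ⟨fun a b => ?_⟩⟩
    induction a using QuotientGroup.induction_on with | H a =>
    induction b using QuotientGroup.induction_on with | H b =>
    exact ⟨b * a⁻¹, congrArg QuotientGroup.mk (inv_mul_cancel_right b a)⟩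
  have key : ∀ H : Subgroup G, ∃ N : ℕ, ∀ m, N ≤ m → c N (XH H) = c m (XH H) := by
    intro H
    haveI : IsNoetherian (T.obj (XH H)) (T.obj (XH H)) := hNoeth (XH H) (hXHtrans H)
    exact monotone_stabilizes_iff_noetherian.mpr this
      ⟨fun n => c n (XH H), monotone_nat_of_le_succ (fun n => hmono n (XH H))⟩
  choose N hN using key
  obtain ⟨n₀, hn₀⟩ := (Set.finite_range N).bddAbove
  refine ⟨n₀, fun n hn => ?_⟩
  funext X
  refine T.ideal_det (hc n) (hc n₀) ?_ X
  intro Z hZ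
  obtain ⟨⟨z₀⟩, htr⟩ := hZ
  set H := MulAction.stabilizer G z₀ with hHdef
  have hlift : ∀ a b : G, @Setoid.r G (QuotientGroup.leftRel H) a b → a • z₀ = b • z₀ := by
    intro a b hab
    have h2 : (a⁻¹ * b) • z₀ = z₀ :=
      MulAction.mem_stabilizer_iff.mp (QuotientGroup.leftRel_apply.mp hab)
    conv_lhs => rw [← h2]
    rw [← mul_smul, mul_inv_cancel_left]
  let f : GSetHom (XH H) Z :=
    ⟨fun q => Quotient.liftOn' q (fun g => g • z₀) hlift, by
      intro g q
      induction q using QuotientGroup.induction_on with | H a =>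
      show (g * a) • z₀ = g • (a • z₀)
      rw [mul_smul]⟩
  have hfbij : Function.Bijective f.toFun := by
    constructor
    · intro a b
      induction a using QuotientGroup.induction_on with | H a =>
      induction b using QuotientGroup.induction_on with | H b =>
      intro hab
      have hab' : a • z₀ = b • z₀ := hab
      refine QuotientGroup.eq.mpr (MulAction.mem_stabilizer_iff.mpr ?_)
      show (a⁻¹ * b) • z₀ = z₀
      rw [mul_smul, ← hab', inv_smul_smul]
    · intro y
      obtain ⟨g, hg⟩ := htr.exists_smul_eq z₀ y
      exact ⟨QuotientGroup.mk g, hg⟩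
  obtain ⟨finv, hf1, hf2⟩ := f.exists_inv hfbij
  have hstab : c n (XH H) = c n₀ (XH H) := by
    have h1 := hN H n (le_trans (hn₀ (Set.mem_range_self H)) hn)
    have h2 := hN H n₀ (hn₀ (Set.mem_range_self H))
    rw [← h1, ← h2]
  ext t
  rw [T.mem_iff_res_mem (hc n) f finv hf1 hf2 t,
    T.mem_iff_res_mem (hc n₀) f finv hf1 hf2 t, hstab]
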